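/- arXiv:2212.02972 — 2 statements merged into one kernel-verified Lean document; each statement's English description precedes it below -/
import Mathlib

section
/- Let n ≥ 1 be an integer with (q−1) | n. Let (α_1, …, α_n) be an 𝔽-basis of {α ∈ 𝔽[θ] : deg_θ α < n}, and let a_0, a_1, …, a_n ∈ 𝔽[t] be a relatively prime family (gcd(a_0, …, a_n) = 1) such that a_0·ω_n + a_1·ξ_{α_1} + ⋯ + a_n·ξ_{α_n} ∈ 𝔽[θ,t]. Then e := ∑_{i=1}^n a_i·α_i ∈ 𝔽[θ,t]_{deg_θ<n} generates ker φ; that is, {e' ∈ 𝔽[θ,t]_{deg_θ<n} : ξ_{e'} ∈ 𝔽[θ,t] + 𝔽[t]·ω_n} = 𝔽[t]·e. -/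
open scoped Classical ENNReal
open Filter

noncomputable section

namespace Carlitz

variable (F : Type) [Field F] [Fintype F]

/-- `K∞ = 𝔽((1/θ))`, realized as the field of formal Laurent series over `F`;
the Laurent-series variable plays the role of `1/θ`. -/
abbrev Kinf := LaurentSeries F

/-- `θ ∈ K∞`, the inverse of the Laurent-series variable. -/
def theta : Kinf F := HahnSeries.single (-1 : ℤ) (1 : F)

/-- The absolute value `|x| = q ^ (deg_θ x)`, with values in `ℝ≥0∞`. -/
def Kabs {R : Type} [Zero R] (q : ℕ) (x : HahnSeries ℤ R) : ℝ≥0∞ :=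
  if x = 0 then 0 else (q : ℝ≥0∞) ^ (-x.order)

/-- The ambient ring of the Tate algebra: formal power series in `t` over `K∞`. -/
abbrev TS := PowerSeries (Kinf F)

/-- The `i`-th `t`-coefficient. -/
def coeffT (i : ℕ) (f : TS F) : Kinf F := PowerSeries.coeff (R := Kinf F) i f

/-- Membership in the Tate algebra `K∞⟨t⟩`: the coefficients tend to `0`. -/
def IsTate (f : TS F) : Prop :=
  Tendsto (fun i => Kabs (Fintype.card F) (coeffT F i f)) atTop (nhds 0)

/-- The Gauss norm `‖f‖ = sup_i |a_i|`. -/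
def gnorm (f : TS F) : ℝ≥0∞ := ⨆ i, Kabs (Fintype.card F) (coeffT F i f)

/-- The twist `f ↦ f⁽¹⁾`: the coefficientwise `q`-power Frobenius. -/
def twist (f : TS F) : TS F := PowerSeries.mk fun i => coeffT F i f ^ Fintype.card F

/-- The iterated twist `f ↦ f⁽ᵏ⁾`. -/
def twistIter (k : ℕ) (f : TS F) : TS F := (twist F)^[k] f

/-- The variable `t` of the Tate algebra. -/
def tt : TS F := PowerSeries.X

/-- `θ`, viewed as a constant of `K∞⟨t⟩`. -/
def th : TS F := PowerSeries.C (R := Kinf F) (theta F)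

/-- The embedding `𝔽[θ] → K∞` sending the polynomial variable to `θ`. -/
def polyK : Polynomial F →+* Kinf F :=
  Polynomial.eval₂RingHom (HahnSeries.C : F →+* Kinf F) (theta F)

/-- The embedding `𝔽[θ][t] → K∞⟨t⟩`: the outer variable goes to `t`,
the inner variable goes to `θ`. -/
def polyT : Polynomial (Polynomial F) →+* TS F :=
  Polynomial.eval₂RingHom ((PowerSeries.C (R := Kinf F)).comp (polyK F)) PowerSeries.X

/-- The subring `𝔽[θ,t] ⊆ K∞⟨t⟩`. -/
def PolyTT : Set (TS F) := Set.range (polyT F)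

/-- The subset of `𝔽[θ,t]` of elements of `θ`-degree `< n`. -/
def PolyDegLt (n : ℕ) : Set (TS F) :=
  {f | ∃ P : Polynomial (Polynomial F), (∀ i, (P.coeff i).degree < (n : ℕ)) ∧ f = polyT F P}

/-- The action of `𝔽[t]` on `K∞⟨t⟩`: `a • f` is `actT a * f`. -/
def actT : Polynomial F →+* TS F :=
  Polynomial.eval₂RingHom ((PowerSeries.C (R := Kinf F)).comp (HahnSeries.C : F →+* Kinf F))
    PowerSeries.X

/-- Convergence in `K∞⟨t⟩` with respect to the Gauss norm:
`L` is the limit of the sequence `s`. -/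
def TT (s : ℕ → TS F) (L : TS F) : Prop :=
  Tendsto (fun N => gnorm F (L - s N)) atTop (nhds 0)

/-- Convergence in `K∞`: `L` is the limit of the sequence `s`. -/
def KT (q : ℕ) (s : ℕ → Kinf F) (L : Kinf F) : Prop :=
  Tendsto (fun N => Kabs q (L - s N)) atTop (nhds 0)

/-- Partial products defining `ν_n = (−θ)^{−h} ∏_{j≥0} (1 − t·θ^{−qʲ})ⁿ`,
where `n = h(q−1) + δ`. -/
def nuPartial (n h N : ℕ) : TS F :=
  PowerSeries.C (R := Kinf F) ((-theta F)⁻¹ ^ h) *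
    ∏ j ∈ Finset.range N,
      (1 - tt F * PowerSeries.C (R := Kinf F) ((theta F)⁻¹ ^ Fintype.card F ^ j)) ^ n

/-- Partial products defining `ω_n = (−θ)^m ∏_{i≥0} (1 − t·θ^{−qⁱ})^{−n}`,
where `n = m(q−1)`; `ω_n` is the `n`-th power of the Anderson–Thakur function. -/
def omegaPartial (n m N : ℕ) : TS F :=
  PowerSeries.C (R := Kinf F) ((-theta F) ^ m) *
    ∏ i ∈ Finset.range N,
      ((1 - tt F * PowerSeries.C (R := Kinf F) ((theta F)⁻¹ ^ Fintype.card F ^ i)) ^ n)⁻¹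

/-- Partial sums defining `ξ_e = ∑_{k≥0} e⁽ᵏ⁾ ∏_{i=0}^{k} (t−θ^{qⁱ})^{−n}`. -/
def xiPartial (n : ℕ) (e : TS F) (N : ℕ) : TS F :=
  ∑ k ∈ Finset.range N, twistIter F k e *
    (∏ i ∈ Finset.range (k + 1),
      (tt F - PowerSeries.C (R := Kinf F) (theta F ^ Fintype.card F ^ i)) ^ n)⁻¹

/-- Partial sums defining `s_h = h + ∑_{i≥1} h⁽ⁱ⁾ ∏_{j=0}^{i−1} (t−θ^{qʲ})^{−n}`. -/
def sPartial (n : ℕ) (h : TS F) (N : ℕ) : TS F :=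
  ∑ i ∈ Finset.range N, twistIter F i h *
    (∏ j ∈ Finset.range i,
      (tt F - PowerSeries.C (R := Kinf F) (theta F ^ Fintype.card F ^ j)) ^ n)⁻¹

/-- The map `β : f ↦ f − (t−θ)ⁿ f⁽¹⁾`. -/
def beta (n : ℕ) (f : TS F) : TS F := f - (tt F - th F) ^ n * twist F f

/-- The set of integral extension representatives
`X_n = {ξ ∈ K∞⟨t⟩ : (t−θ)ⁿ ξ − ξ⁽¹⁾ ∈ 𝔽[θ,t]}`. -/
def Xset (n : ℕ) : Set (TS F) :=
  {ξ | IsTate F ξ ∧ (tt F - th F) ^ n * ξ - twist F ξ ∈ PolyTT F}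


section Aux

lemma one_lt_qe : (1:ℝ≥0∞) < (Fintype.card F : ℝ≥0∞) := by
  exact_mod_cast Fintype.one_lt_card

lemma qe_ne_zero : (Fintype.card F : ℝ≥0∞) ≠ 0 := by
  have := one_lt_qe F; intro h; rw [h] at this; exact (not_lt.mpr zero_le_one) this

lemma qe_ne_top : (Fintype.card F : ℝ≥0∞) ≠ ⊤ := by
  exact ENNReal.natCast_ne_top _

lemma Kabs_zero : Kabs (Fintype.card F) (0 : Kinf F) = 0 := if_pos rfl

lemma Kabs_of_ne {x : Kinf F} (hx : x ≠ 0) :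
    Kabs (Fintype.card F) x = (Fintype.card F : ℝ≥0∞) ^ (-x.order) := if_neg hx

lemma Kabs_eq_zero_iff {x : Kinf F} : Kabs (Fintype.card F) x = 0 ↔ x = 0 := by
  constructor
  · intro h
    by_contra hx
    rw [Kabs_of_ne F hx] at h
    exact (ENNReal.zpow_pos (qe_ne_zero F) (qe_ne_top F) _).ne' h
  · rintro rfl; exact Kabs_zero F

lemma Kabs_ne_top {x : Kinf F} : Kabs (Fintype.card F) x ≠ ⊤ := by
  by_cases hx : x = 0
  · subst hx; rw [Kabs_zero]; exact ENNReal.zero_ne_top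
  · rw [Kabs_of_ne F hx]
    exact (ENNReal.zpow_lt_top (qe_ne_zero F) (qe_ne_top F) _).ne

lemma Kabs_neg (x : Kinf F) : Kabs (Fintype.card F) (-x) = Kabs (Fintype.card F) x := by
  by_cases hx : x = 0
  · subst hx; simp
  · rw [Kabs_of_ne F (neg_ne_zero.mpr hx), Kabs_of_ne F hx, HahnSeries.order_neg]

lemma Kabs_add_le (x y : Kinf F) :
    Kabs (Fintype.card F) (x + y) ≤ max (Kabs (Fintype.card F) x) (Kabs (Fintype.card F) y) := by
  by_cases hxy : x + y = 0
  · rw [hxy, Kabs_zero]; exact zero_le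
  by_cases hx : x = 0
  · subst hx; rw [zero_add]; exact le_max_right _ _
  by_cases hy : y = 0
  · subst hy; rw [add_zero]; exact le_max_left _ _
  have hmin : min x.order y.order ≤ (x + y).order :=
    HahnSeries.min_order_le_order_add hxy
  rw [Kabs_of_ne F hxy, Kabs_of_ne F hx, Kabs_of_ne F hy]
  rcases le_total x.order y.order with h | h
  · refine le_max_of_le_left (ENNReal.zpow_le_of_le (one_lt_qe F).le ?_)
    simpa [min_eq_left h] using neg_le_neg hmin
  · refine le_max_of_le_right (ENNReal.zpow_le_of_le (one_lt_qe F).le ?_)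
    simpa [min_eq_right h] using neg_le_neg hmin

lemma Kabs_mul (x y : Kinf F) :
    Kabs (Fintype.card F) (x * y) = Kabs (Fintype.card F) x * Kabs (Fintype.card F) y := by
  by_cases hx : x = 0
  · subst hx; simp [Kabs_zero]
  by_cases hy : y = 0
  · subst hy; simp [Kabs_zero]
  rw [Kabs_of_ne F (mul_ne_zero hx hy), Kabs_of_ne F hx, Kabs_of_ne F hy,
    HahnSeries.order_mul hx hy, neg_add,
    ENNReal.zpow_add (qe_ne_zero F) (qe_ne_top F)]

lemma Kabs_one : Kabs (Fintype.card F) (1 : Kinf F) = 1 := by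
  rw [Kabs_of_ne F one_ne_zero, HahnSeries.order_one]; simp

lemma Kabs_pow (x : Kinf F) (j : ℕ) :
    Kabs (Fintype.card F) (x ^ j) = Kabs (Fintype.card F) x ^ j := by
  induction j with
  | zero => simpa using Kabs_one F
  | succ j ih => rw [pow_succ, pow_succ, Kabs_mul, ih]

lemma Kabs_single {a : ℤ} {r : F} (hr : r ≠ 0) :
    Kabs (Fintype.card F) (HahnSeries.single a r) = (Fintype.card F : ℝ≥0∞) ^ (-a) := by
  rw [Kabs_of_ne F (HahnSeries.single_ne_zero hr), HahnSeries.order_single hr]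

lemma Kabs_sum_le {ι : Type*} {s : Finset ι} {f : ι → Kinf F} {B : ℝ≥0∞}
    (h : ∀ i ∈ s, Kabs (Fintype.card F) (f i) ≤ B) :
    Kabs (Fintype.card F) (∑ i ∈ s, f i) ≤ B := by
  classical
  induction s using Finset.induction_on with
  | empty => simpa [Kabs_zero] using (zero_le : 0 ≤ B)
  | insert _ _ hnot ih =>
    rename_i a s
    rw [Finset.sum_insert hnot]
    refine le_trans (Kabs_add_le F _ _) (max_le (h a (Finset.mem_insert_self a s))
      (ih fun i hi => h i (Finset.mem_insert_of_mem hi)))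


set_option linter.unusedSectionVars false
set_option linter.unnecessarySimpa false

lemma theta_pow (k : ℕ) : theta F ^ k = HahnSeries.single (-(k:ℤ)) (1 : F) := by
  rw [theta, HahnSeries.single_pow, one_pow]
  congr 1
  rw [nsmul_eq_mul, mul_neg_one]

lemma polyK_C (r : F) : polyK F (Polynomial.C r) = HahnSeries.C r := by
  simp [polyK]

lemma polyK_monomial (c : F) (k : ℕ) :
    polyK F (Polynomial.monomial k c) = HahnSeries.single (-(k:ℤ)) c := by
  rw [← Polynomial.C_mul_X_pow_eq_monomial, map_mul, map_pow, polyK_C]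
  rw [show polyK F Polynomial.X = theta F by simp [polyK]]
  rw [theta_pow, HahnSeries.C_apply, HahnSeries.single_mul_single, zero_add, mul_one]

lemma polyK_apply (b : Polynomial F) :
    polyK F b = ∑ k ∈ Finset.range (b.natDegree + 1),
      HahnSeries.single (-(k:ℤ)) (b.coeff k) := by
  conv_lhs => rw [b.as_sum_range' (b.natDegree + 1) (Nat.lt_succ_self _)]
  rw [map_sum]
  exact Finset.sum_congr rfl fun k _ => polyK_monomial F _ k

lemma polyK_coeff (b : Polynomial F) (k : ℕ) :
    (polyK F b).coeff (-(k:ℤ)) = b.coeff k := by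
  rw [polyK_apply]
  rw [show ((∑ j ∈ Finset.range (b.natDegree + 1),
      HahnSeries.single (-(j:ℤ)) (b.coeff j)).coeff (-(k:ℤ)))
    = ∑ j ∈ Finset.range (b.natDegree + 1),
      (HahnSeries.single (-(j:ℤ)) (b.coeff j)).coeff (-(k:ℤ)) from
    map_sum (HahnSeries.coeff.addMonoidHom (-(k:ℤ))) _ _]
  by_cases hk : k < b.natDegree + 1
  · rw [Finset.sum_eq_single k]
    · exact HahnSeries.coeff_single_same _ _
    · intro j _ hj
      refine HahnSeries.coeff_single_of_ne fun h => ?_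
      have : k = j := by exact_mod_cast neg_injective h
      exact hj this.symm
    · intro h; exact absurd (Finset.mem_range.mpr hk) h
  · rw [Finset.sum_eq_zero, eq_comm]
    · exact Polynomial.coeff_eq_zero_of_natDegree_lt (by omega)
    · intro j hj
      refine HahnSeries.coeff_single_of_ne ?_
      have : j < b.natDegree + 1 := Finset.mem_range.mp hj
      intro h
      have : k = j := by exact_mod_cast neg_injective h
      omega

lemma polyK_eq_zero {b : Polynomial F} (h : polyK F b = 0) : b = 0 := by
  ext k
  rw [← polyK_coeff F b k, h]
  simp

lemma Kabs_polyK_le {b : Polynomial F} {n : ℕ} (hb : b.degree < (n:ℕ)) (hn : 1 ≤ n) :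
    Kabs (Fintype.card F) (polyK F b) ≤ (Fintype.card F : ℝ≥0∞) ^ ((n:ℤ) - 1) := by
  rw [polyK_apply]
  refine Kabs_sum_le F fun k _ => ?_
  by_cases hc : b.coeff k = 0
  · rw [hc, HahnSeries.single_eq_zero, Kabs_zero]
    exact zero_le
  · rw [Kabs_single F hc, neg_neg]
    refine ENNReal.zpow_le_of_le (one_lt_qe F).le ?_
    have hk : (k : WithBot ℕ) ≤ b.degree := Polynomial.le_degree_of_ne_zero hc
    have : (k : WithBot ℕ) < (n : ℕ) := lt_of_le_of_lt hk hb
    have hkn : k < n := by exact_mod_cast this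
    omega

lemma one_le_Kabs_polyK {b : Polynomial F} (hb : b ≠ 0) :
    1 ≤ Kabs (Fintype.card F) (polyK F b) := by
  have hcoeff : (polyK F b).coeff (-(b.natDegree : ℤ)) ≠ 0 := by
    rw [polyK_coeff]
    exact Polynomial.leadingCoeff_ne_zero.mpr hb
  have hne : polyK F b ≠ 0 := fun h => hcoeff (by rw [h]; simp)
  have horder : (polyK F b).order ≤ 0 :=
    le_trans (HahnSeries.order_le_of_coeff_ne_zero hcoeff) (by simp)
  rw [Kabs_of_ne F hne]
  calc (1:ℝ≥0∞) = (Fintype.card F : ℝ≥0∞) ^ (0:ℤ) := by simp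
  _ ≤ _ := ENNReal.zpow_le_of_le (one_lt_qe F).le (by omega)


lemma le_gnorm (f : TS F) (i : ℕ) : Kabs (Fintype.card F) (coeffT F i f) ≤ gnorm F f := by
  unfold gnorm
  exact le_iSup (fun j => Kabs (Fintype.card F) (coeffT F j f)) i

lemma gnorm_le_iff {f : TS F} {B : ℝ≥0∞} :
    gnorm F f ≤ B ↔ ∀ i, Kabs (Fintype.card F) (coeffT F i f) ≤ B := iSup_le_iff

lemma gnorm_zero : gnorm F 0 = 0 := by
  simp [gnorm, coeffT, Kabs_zero]

lemma gnorm_eq_zero {f : TS F} (h : gnorm F f = 0) : f = 0 := by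
  rw [gnorm, ENNReal.iSup_eq_zero] at h
  apply PowerSeries.ext
  intro i
  have := (Kabs_eq_zero_iff F).mp (h i)
  simpa [coeffT] using this

lemma gnorm_neg (f : TS F) : gnorm F (-f) = gnorm F f := by
  unfold gnorm
  congr 1; funext i
  rw [show coeffT F i (-f) = -(coeffT F i f) by simp [coeffT], Kabs_neg]

lemma gnorm_add_le (f g : TS F) : gnorm F (f + g) ≤ max (gnorm F f) (gnorm F g) := by
  rw [gnorm_le_iff]
  intro i
  rw [show coeffT F i (f + g) = coeffT F i f + coeffT F i g by simp [coeffT]]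
  exact le_trans (Kabs_add_le F _ _)
    (max_le_max (le_gnorm F f i) (le_gnorm F g i))

lemma gnorm_sum_le {ι : Type*} {s : Finset ι} {f : ι → TS F} {B : ℝ≥0∞}
    (h : ∀ i ∈ s, gnorm F (f i) ≤ B) : gnorm F (∑ i ∈ s, f i) ≤ B := by
  classical
  induction s using Finset.induction_on with
  | empty => rw [Finset.sum_empty, gnorm_zero]; exact zero_le
  | insert _ _ hnot ih =>
    rename_i a s
    rw [Finset.sum_insert hnot]
    exact le_trans (gnorm_add_le F _ _) (max_le (h a (Finset.mem_insert_self a s))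
      (ih fun i hi => h i (Finset.mem_insert_of_mem hi)))

lemma gnorm_mul_le (f g : TS F) : gnorm F (f * g) ≤ gnorm F f * gnorm F g := by
  rw [gnorm_le_iff]
  intro i
  rw [show coeffT F i (f * g)
      = ∑ p ∈ Finset.HasAntidiagonal.antidiagonal i, coeffT F p.1 f * coeffT F p.2 g from
    PowerSeries.coeff_mul i f g]
  refine Kabs_sum_le F fun p _ => ?_
  rw [Kabs_mul]
  exact mul_le_mul' (le_gnorm F f p.1) (le_gnorm F g p.2)

lemma gnorm_one_le : gnorm F 1 ≤ 1 := by
  rw [gnorm_le_iff]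
  intro i
  rw [show coeffT F i (1 : TS F) = if i = 0 then 1 else 0 by
    simp [coeffT, PowerSeries.coeff_one]]
  split
  · rw [Kabs_one]
  · rw [Kabs_zero]; exact zero_le_one

lemma gnorm_prod_le {ι : Type*} {s : Finset ι} {f : ι → TS F} {B : ι → ℝ≥0∞}
    (h : ∀ i ∈ s, gnorm F (f i) ≤ B i) : gnorm F (∏ i ∈ s, f i) ≤ ∏ i ∈ s, B i := by
  classical
  induction s using Finset.induction_on with
  | empty => simpa using gnorm_one_le F
  | insert _ _ hnot ih =>
    rename_i a s
    rw [Finset.prod_insert hnot, Finset.prod_insert hnot]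
    exact le_trans (gnorm_mul_le F _ _)
      (mul_le_mul' (h a (Finset.mem_insert_self a s))
        (ih fun i hi => h i (Finset.mem_insert_of_mem hi)))

lemma gnorm_pow_le {f : TS F} {B : ℝ≥0∞} (h : gnorm F f ≤ B) (k : ℕ) :
    gnorm F (f ^ k) ≤ B ^ k := by
  induction k with
  | zero => simpa using gnorm_one_le F
  | succ k ih =>
    rw [pow_succ, pow_succ]
    exact le_trans (gnorm_mul_le F _ _) (mul_le_mul' ih h)

lemma gnorm_C (x : Kinf F) : gnorm F (PowerSeries.C (R := Kinf F) x) = Kabs (Fintype.card F) x := by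
  apply le_antisymm
  · rw [gnorm_le_iff]
    intro i
    rw [show coeffT F i (PowerSeries.C (R := Kinf F) x) = if i = 0 then x else 0 by
      simp [coeffT, PowerSeries.coeff_C]]
    split
    · exact le_refl _
    · rw [Kabs_zero]; exact zero_le
  · have := le_gnorm F (PowerSeries.C (R := Kinf F) x) 0
    simpa [coeffT] using this

lemma gnorm_X_le : gnorm F (tt F) ≤ 1 := by
  rw [gnorm_le_iff]
  intro i
  rw [show coeffT F i (tt F) = if i = 1 then 1 else 0 by
    simp [coeffT, tt, PowerSeries.coeff_X]]
  split
  · rw [Kabs_one]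
  · rw [Kabs_zero]; exact zero_le_one


lemma kinf_add_pow_card (x y : Kinf F) :
    (x + y) ^ (Fintype.card F) = x ^ (Fintype.card F) + y ^ (Fintype.card F) := by
  obtain ⟨p, hc⟩ := CharP.exists F
  haveI := hc
  haveI hp : Fact p.Prime := ⟨CharP.char_is_prime F p⟩
  haveI : CharP (Kinf F) p :=
    charP_of_injective_ringHom (HahnSeries.C_injective (Γ := ℤ) (R := F)) p
  obtain ⟨n, hprime, hn⟩ := FiniteField.card F p
  rw [hn]
  exact add_pow_char_pow x y p (n : ℕ)

/-- The `q`-power Frobenius on `K∞` as a ring homomorphism. -/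
def frobK : Kinf F →+* Kinf F where
  toFun x := x ^ Fintype.card F
  map_one' := one_pow _
  map_mul' x y := mul_pow x y _
  map_zero' := zero_pow Fintype.card_ne_zero
  map_add' := kinf_add_pow_card F

lemma twist_eq_map (f : TS F) : twist F f = PowerSeries.map (frobK F) f := by
  apply PowerSeries.ext
  intro i
  rw [twist, PowerSeries.coeff_mk, PowerSeries.coeff_map]
  rfl


lemma twist_coeff (f : TS F) (i : ℕ) :
    coeffT F i (twist F f) = (coeffT F i f) ^ (Fintype.card F) := by
  rw [coeffT, twist, PowerSeries.coeff_mk]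

lemma twist_add (f g : TS F) : twist F (f + g) = twist F f + twist F g := by
  simp [twist_eq_map]

lemma twist_mul (f g : TS F) : twist F (f * g) = twist F f * twist F g := by
  simp [twist_eq_map]

lemma twist_zero : twist F 0 = 0 := by simp [twist_eq_map]

lemma frobK_CC (r : F) : frobK F (HahnSeries.C r) = HahnSeries.C r := by
  show (HahnSeries.C r : Kinf F) ^ Fintype.card F = HahnSeries.C r
  rw [← map_pow, FiniteField.pow_card]

lemma polyT_coeff (P : Polynomial (Polynomial F)) (j : ℕ) :
    coeffT F j (polyT F P) = polyK F (P.coeff j) := by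
  rw [polyT, coeffT]
  rw [Polynomial.coe_eval₂RingHom, Polynomial.eval₂_eq_sum_range]
  rw [map_sum]
  have hterm : ∀ i, (PowerSeries.coeff (R := Kinf F) j)
      (((PowerSeries.C (R := Kinf F)).comp (polyK F)) (P.coeff i) * PowerSeries.X ^ i)
      = if j = i then polyK F (P.coeff i) else 0 := by
    intro i
    rw [RingHom.comp_apply]
    exact PowerSeries.coeff_C_mul_X_pow _ i j
  by_cases hj : j < P.natDegree + 1
  · rw [Finset.sum_eq_single j]
    · rw [hterm j, if_pos rfl]
    · intro i _ hij; rw [hterm i, if_neg (fun h => hij h.symm)]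
    · intro h; exact absurd (Finset.mem_range.mpr hj) h
  · rw [Finset.sum_eq_zero, eq_comm]
    · rw [Polynomial.coeff_eq_zero_of_natDegree_lt (by omega), map_zero]
    · intro i hi
      rw [hterm i, if_neg]
      have := Finset.mem_range.mp hi
      omega

lemma actT_eq_polyT (a : Polynomial F) :
    actT F a = polyT F (a.map Polynomial.C) := by
  rw [actT, polyT, Polynomial.coe_eval₂RingHom, Polynomial.coe_eval₂RingHom,
    Polynomial.eval₂_map]
  apply Polynomial.eval₂_congr _ rfl rfl
  apply RingHom.ext
  intro r
  simp [polyK_C]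

lemma actT_coeff (a : Polynomial F) (j : ℕ) :
    coeffT F j (actT F a) = HahnSeries.C (a.coeff j) := by
  rw [actT_eq_polyT, polyT_coeff, Polynomial.coeff_map, polyK_C]

lemma twist_actT (a : Polynomial F) : twist F (actT F a) = actT F a := by
  apply PowerSeries.ext
  intro j
  show coeffT F j (twist F (actT F a)) = coeffT F j (actT F a)
  rw [twist_coeff, actT_coeff, ← map_pow, FiniteField.pow_card]

lemma twistIter_succ (k : ℕ) (f : TS F) :
    twistIter F (k + 1) f = twist F (twistIter F k f) := by
  rw [twistIter, twistIter, Function.iterate_succ_apply']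

lemma twistIter_zero_fn (k : ℕ) : twistIter F k 0 = 0 := by
  induction k with
  | zero => rfl
  | succ k ih =>
    rw [twistIter_succ, ih, twist_zero]

lemma twistIter_add (k : ℕ) (f g : TS F) :
    twistIter F k (f + g) = twistIter F k f + twistIter F k g := by
  induction k with
  | zero => rfl
  | succ k ih =>
    rw [twistIter_succ, twistIter_succ, twistIter_succ, ih, twist_add]

lemma twistIter_actT_mul (k : ℕ) (a : Polynomial F) (f : TS F) :
    twistIter F k (actT F a * f) = actT F a * twistIter F k f := by
  induction k with
  | zero => rfl
  | succ k ih =>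
    rw [twistIter_succ, twistIter_succ, ih, twist_mul, twist_actT]

lemma gnorm_twist_le {f : TS F} {B : ℝ≥0∞} (h : gnorm F f ≤ B) :
    gnorm F (twist F f) ≤ B ^ (Fintype.card F) := by
  rw [gnorm_le_iff]
  intro i
  rw [twist_coeff, Kabs_pow]
  exact pow_le_pow_left' (le_trans (le_gnorm F f i) h) _

lemma gnorm_twistIter_le {f : TS F} {B : ℝ≥0∞} (h : gnorm F f ≤ B) (k : ℕ) :
    gnorm F (twistIter F k f) ≤ B ^ (Fintype.card F ^ k) := by
  induction k with
  | zero => simpa [twistIter] using h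
  | succ k ih =>
    rw [twistIter_succ]
    calc gnorm F (twist F (twistIter F k f)) ≤ (B ^ (Fintype.card F ^ k)) ^ (Fintype.card F) :=
      gnorm_twist_le F ih
    _ = B ^ (Fintype.card F ^ (k + 1)) := by rw [← pow_mul, pow_succ]


lemma polyT_C (b : Polynomial F) :
    polyT F (Polynomial.C b) = PowerSeries.C (R := Kinf F) (polyK F b) := by
  rw [polyT, Polynomial.coe_eval₂RingHom, Polynomial.eval₂_C, RingHom.comp_apply]

lemma polyT_eq_zero {P : Polynomial (Polynomial F)} (h : polyT F P = 0) : P = 0 := by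
  apply Polynomial.ext
  intro j
  have := polyT_coeff F P j
  rw [h] at this
  have h0 : polyK F (P.coeff j) = 0 := by
    rw [← this]; simp [coeffT]
  exact polyK_eq_zero F h0

lemma one_le_gnorm_polyT {P : Polynomial (Polynomial F)} (h : polyT F P ≠ 0) :
    1 ≤ gnorm F (polyT F P) := by
  have hP : P ≠ 0 := fun hP => h (by rw [hP, map_zero])
  obtain ⟨j, hj⟩ : ∃ j, P.coeff j ≠ 0 := by
    by_contra hc
    push_neg at hc
    exact hP (Polynomial.ext fun j => by simpa using hc j)
  calc (1:ℝ≥0∞) ≤ Kabs (Fintype.card F) (coeffT F j (polyT F P)) := by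
        rw [polyT_coeff]; exact one_le_Kabs_polyK F hj
  _ ≤ gnorm F (polyT F P) := le_gnorm F _ j

lemma gnorm_polyT_le {P : Polynomial (Polynomial F)} {n : ℕ}
    (h : ∀ i, (P.coeff i).degree < (n:ℕ)) (hn : 1 ≤ n) :
    gnorm F (polyT F P) ≤ (Fintype.card F : ℝ≥0∞) ^ ((n:ℤ) - 1) := by
  rw [gnorm_le_iff]
  intro i
  rw [polyT_coeff]
  exact Kabs_polyK_le F (h i) hn

/-- polynomial representing an `𝔽[t]`-combination of the `α i`. -/
def combPoly {k : ℕ} (d : Fin k → Polynomial F) (α : Fin k → Polynomial F) :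
    Polynomial (Polynomial F) :=
  ∑ i, (d i).map Polynomial.C * Polynomial.C (α i)

lemma polyT_combPoly {k : ℕ} (d : Fin k → Polynomial F) (α : Fin k → Polynomial F) :
    polyT F (combPoly F d α)
      = ∑ i, actT F (d i) * PowerSeries.C (R := Kinf F) (polyK F (α i)) := by
  rw [combPoly, map_sum]
  refine Finset.sum_congr rfl fun i _ => ?_
  rw [map_mul, polyT_C, actT_eq_polyT]

lemma combPoly_coeff {k : ℕ} (d : Fin k → Polynomial F) (α : Fin k → Polynomial F) (j : ℕ) :
    (combPoly F d α).coeff j = ∑ i, Polynomial.C ((d i).coeff j) * α i := by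
  rw [combPoly, Polynomial.finset_sum_coeff]
  refine Finset.sum_congr rfl fun i _ => ?_
  rw [Polynomial.coeff_mul_C, Polynomial.coeff_map]

lemma combPoly_mem_PolyDegLt {k n : ℕ} (d : Fin k → Polynomial F)
    (α : Fin k → Polynomial F) (hα : ∀ i, (α i).degree < (n:ℕ)) :
    (∑ i, actT F (d i) * PowerSeries.C (R := Kinf F) (polyK F (α i))) ∈ PolyDegLt F n := by
  refine ⟨combPoly F d α, fun j => ?_, (polyT_combPoly F d α).symm⟩
  rw [combPoly_coeff]
  refine lt_of_le_of_lt (Polynomial.degree_sum_le _ _) ?_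
  refine (Finset.sup_lt_iff ?_).mpr ?_
  · exact_mod_cast WithBot.bot_lt_coe (n:ℕ)
  intro i _
  refine lt_of_le_of_lt ?_ (hα i)
  by_cases hc : ((d i).coeff j) = 0
  · rw [hc, map_zero, zero_mul, Polynomial.degree_zero]
    exact bot_le
  · rw [Polynomial.degree_C_mul hc]

lemma comb_eq_zero_iff {n : ℕ} {α : Fin n → Polynomial F}
    (hbasis : ∀ b : Polynomial F, b.degree < (n : ℕ) →
      ∃! cf : Fin n → F, b = ∑ i, Polynomial.C (cf i) * α i)
    {d : Fin n → Polynomial F}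
    (h : ∑ i, actT F (d i) * PowerSeries.C (R := Kinf F) (polyK F (α i)) = 0) :
    ∀ i, d i = 0 := by
  have hcomb : combPoly F d α = 0 := by
    apply polyT_eq_zero F
    rw [polyT_combPoly, h]
  intro i
  ext j
  have hj : (combPoly F d α).coeff j = 0 := by rw [hcomb]; simp
  rw [combPoly_coeff] at hj
  obtain ⟨cf, _, huniq⟩ := hbasis 0 (by rw [Polynomial.degree_zero]; exact WithBot.bot_lt_coe (n:ℕ))
  have h1 : (fun i => (d i).coeff j) = cf :=
    huniq _ hj.symm
  have h2 : (fun _ => (0:F)) = cf := huniq _ (by simp)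
  have := congrFun (h1.trans h2.symm) i
  simpa using this

lemma exists_coords {n : ℕ} {α : Fin n → Polynomial F}
    (hbasis : ∀ b : Polynomial F, b.degree < (n : ℕ) →
      ∃! cf : Fin n → F, b = ∑ i, Polynomial.C (cf i) * α i)
    {f : TS F} (hf : f ∈ PolyDegLt F n) :
    ∃ c : Fin n → Polynomial F,
      f = ∑ i, actT F (c i) * PowerSeries.C (R := Kinf F) (polyK F (α i)) := by
  obtain ⟨P, hdeg, rfl⟩ := hf
  choose cf hcf _ using fun j => hbasis (P.coeff j) (hdeg j)
  refine ⟨fun i => ∑ j ∈ Finset.range (P.natDegree + 1), Polynomial.C (cf j i) * Polynomial.X ^ j,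
    ?_⟩
  rw [← polyT_combPoly]
  congr 1
  apply Polynomial.ext
  intro j
  rw [combPoly_coeff]
  have hcoeff : ∀ i, (∑ j' ∈ Finset.range (P.natDegree + 1),
      Polynomial.C (cf j' i) * Polynomial.X ^ j').coeff j
      = if j < P.natDegree + 1 then cf j i else 0 := by
    intro i
    rw [Polynomial.finset_sum_coeff]
    by_cases hj : j < P.natDegree + 1
    · rw [Finset.sum_eq_single j, if_pos hj]
      · simp
      · intro j' _ hj'
        simp [Polynomial.coeff_C_mul, Polynomial.coeff_X_pow, Ne.symm hj']
      · intro h; exact absurd (Finset.mem_range.mpr hj) h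
    · rw [if_neg hj, Finset.sum_eq_zero]
      intro j' hj'
      have : j' < P.natDegree + 1 := Finset.mem_range.mp hj'
      simp [Polynomial.coeff_C_mul, Polynomial.coeff_X_pow]
      intro hjj'
      omega
  by_cases hj : j < P.natDegree + 1
  · simp only [hcoeff, if_pos hj]
    exact hcf j
  · simp only [hcoeff, if_neg hj, map_zero, zero_mul, Finset.sum_const_zero]
    exact Polynomial.coeff_eq_zero_of_natDegree_lt (by omega)


lemma ts_inv_eq_of_mul_eq_one {f g : TS F} (h : f * g = 1) : f⁻¹ = g := by
  have hcc : (PowerSeries.constantCoeff (R := Kinf F)) f ≠ 0 := by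
    intro h0
    have := congrArg (PowerSeries.constantCoeff (R := Kinf F)) h
    rw [map_mul, map_one, h0, zero_mul] at this
    exact zero_ne_one this
  rw [PowerSeries.inv_eq_iff_mul_eq_one hcc, mul_comm]
  exact h

/-- Geometric-series inverse for `t - C c`, built from `c' = c⁻¹`. -/
def geomInv (c' : Kinf F) : TS F := PowerSeries.mk fun k => -(c' ^ (k + 1))

lemma geomInv_mul {c c' : Kinf F} (h : c * c' = 1) :
    (tt F - PowerSeries.C (R := Kinf F) c) * geomInv F c' = 1 := by
  apply PowerSeries.ext
  intro k
  rw [sub_mul, map_sub, PowerSeries.coeff_C_mul]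
  simp only [geomInv, tt, PowerSeries.coeff_mk]
  cases k with
  | zero =>
    rw [PowerSeries.coeff_zero_X_mul, PowerSeries.coeff_one, if_pos rfl]
    linear_combination h
  | succ k =>
    rw [PowerSeries.coeff_succ_X_mul, PowerSeries.coeff_mk, PowerSeries.coeff_one,
      if_neg (Nat.succ_ne_zero k)]
    linear_combination (c' ^ (k + 1)) * h

lemma gnorm_geomInv_le {c' : Kinf F} (h : Kabs (Fintype.card F) c' ≤ 1) :
    gnorm F (geomInv F c') ≤ Kabs (Fintype.card F) c' := by
  rw [gnorm_le_iff]
  intro k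
  rw [show coeffT F k (geomInv F c') = -(c' ^ (k + 1)) from PowerSeries.coeff_mk _ _]
  rw [Kabs_neg, Kabs_pow, pow_succ]
  calc Kabs (Fintype.card F) c' ^ k * Kabs (Fintype.card F) c'
      ≤ 1 * Kabs (Fintype.card F) c' := mul_le_mul' (pow_le_one' h k) (le_refl _)
  _ = _ := one_mul _

/-- The inverse constant `θ^{-q^i} = single (q^i) 1`. -/
def thetaInv (i : ℕ) : Kinf F := HahnSeries.single ((Fintype.card F ^ i : ℕ) : ℤ) (1 : F)

lemma theta_pow_mul_thetaInv (i : ℕ) :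
    theta F ^ (Fintype.card F ^ i) * thetaInv F i = 1 := by
  rw [theta_pow, thetaInv, HahnSeries.single_mul_single, one_mul, neg_add_cancel,
    HahnSeries.single_zero_one]

lemma Kabs_thetaInv (i : ℕ) :
    Kabs (Fintype.card F) (thetaInv F i) = (Fintype.card F : ℝ≥0∞) ^ (-((Fintype.card F ^ i : ℕ) : ℤ)) := by
  rw [thetaInv, Kabs_single F one_ne_zero]

lemma Kabs_thetaInv_le_one (i : ℕ) : Kabs (Fintype.card F) (thetaInv F i) ≤ 1 := by
  rw [Kabs_thetaInv]
  calc (Fintype.card F : ℝ≥0∞) ^ (-((Fintype.card F ^ i : ℕ) : ℤ))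
      ≤ (Fintype.card F : ℝ≥0∞) ^ (0:ℤ) :=
    ENNReal.zpow_le_of_le (one_lt_qe F).le (neg_nonpos.mpr (Int.natCast_nonneg _))
  _ = 1 := by simp

/-- The factor `(t - θ^{qⁱ})ⁿ` appearing in `ξ`. -/
def cfactor (n i : ℕ) : TS F :=
  (tt F - PowerSeries.C (R := Kinf F) (theta F ^ Fintype.card F ^ i)) ^ n

/-- Its explicit inverse. -/
def invE (n i : ℕ) : TS F := (geomInv F (thetaInv F i)) ^ n

lemma cfactor_mul_invE (n i : ℕ) : cfactor F n i * invE F n i = 1 := by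
  rw [cfactor, invE, ← mul_pow, geomInv_mul F (theta_pow_mul_thetaInv F i), one_pow]

lemma qe_zpow_nmul (z : ℤ) (k : ℕ) :
    ((Fintype.card F : ℝ≥0∞) ^ z) ^ k = (Fintype.card F : ℝ≥0∞) ^ (z * k) := by
  induction k with
  | zero => simp
  | succ k ih =>
    rw [pow_succ, ih, ← ENNReal.zpow_add (qe_ne_zero F) (qe_ne_top F)]
    congr 1
    push_cast
    ring

lemma gnorm_invE_le (n i : ℕ) :
    gnorm F (invE F n i)
      ≤ (Fintype.card F : ℝ≥0∞) ^ (-((n : ℤ) * ((Fintype.card F ^ i : ℕ) : ℤ))) := by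
  rw [invE]
  calc gnorm F (geomInv F (thetaInv F i) ^ n)
      ≤ (Kabs (Fintype.card F) (thetaInv F i)) ^ n :=
    gnorm_pow_le F (gnorm_geomInv_le F (Kabs_thetaInv_le_one F i)) n
  _ ≤ _ := by
    rw [Kabs_thetaInv, qe_zpow_nmul]
    apply le_of_eq
    congr 1
    ring

lemma prod_cfactor_inv (n N : ℕ) :
    (∏ i ∈ Finset.range N, cfactor F n i)⁻¹ = ∏ i ∈ Finset.range N, invE F n i := by
  apply ts_inv_eq_of_mul_eq_one
  rw [← Finset.prod_mul_distrib]
  rw [Finset.prod_congr rfl fun i _ => cfactor_mul_invE F n i]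
  exact Finset.prod_const_one

lemma inv_prod_mul_prod (n N : ℕ) :
    (∏ i ∈ Finset.range N, cfactor F n i)⁻¹ * (∏ i ∈ Finset.range N, cfactor F n i) = 1 := by
  rw [prod_cfactor_inv, mul_comm, ← Finset.prod_mul_distrib,
    Finset.prod_congr rfl fun i _ => cfactor_mul_invE F n i]
  exact Finset.prod_const_one

lemma qe_zpow_prod {ι : Type*} (s : Finset ι) (z : ι → ℤ) :
    ∏ i ∈ s, (Fintype.card F : ℝ≥0∞) ^ (z i) = (Fintype.card F : ℝ≥0∞) ^ (∑ i ∈ s, z i) := by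
  classical
  induction s using Finset.induction_on with
  | empty => simp
  | insert _ _ hnot ih =>
    rename_i a s
    rw [Finset.prod_insert hnot, Finset.sum_insert hnot, ih,
      ENNReal.zpow_add (qe_ne_zero F) (qe_ne_top F)]

lemma gnorm_prod_invE_le (n N : ℕ) :
    gnorm F (∏ i ∈ Finset.range N, invE F n i)
      ≤ (Fintype.card F : ℝ≥0∞) ^ (-((n : ℤ) * ∑ i ∈ Finset.range N, ((Fintype.card F ^ i : ℕ) : ℤ))) := by
  calc gnorm F (∏ i ∈ Finset.range N, invE F n i)
      ≤ ∏ i ∈ Finset.range N,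
        (Fintype.card F : ℝ≥0∞) ^ (-((n : ℤ) * ((Fintype.card F ^ i : ℕ) : ℤ))) :=
    gnorm_prod_le F fun i _ => gnorm_invE_le F n i
  _ = _ := by
    rw [qe_zpow_prod]
    congr 1
    rw [Finset.mul_sum, ← Finset.sum_neg_distrib]


lemma qe_exp_le {a b : ℤ} (h : (Fintype.card F : ℝ≥0∞) ^ a ≤ (Fintype.card F : ℝ≥0∞) ^ b) :
    a ≤ b := by
  by_contra hab
  push_neg at hab
  have h1 : (Fintype.card F : ℝ≥0∞) ^ b * (Fintype.card F : ℝ≥0∞)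
      ≤ (Fintype.card F : ℝ≥0∞) ^ a := by
    calc (Fintype.card F : ℝ≥0∞) ^ b * (Fintype.card F : ℝ≥0∞)
        = (Fintype.card F : ℝ≥0∞) ^ (b + 1) := by
          rw [ENNReal.zpow_add (qe_ne_zero F) (qe_ne_top F), zpow_one]
    _ ≤ _ := ENNReal.zpow_le_of_le (one_lt_qe F).le (by omega)
  have h2 : (Fintype.card F : ℝ≥0∞) ^ b * (Fintype.card F : ℝ≥0∞)
      ≤ (Fintype.card F : ℝ≥0∞) ^ b * 1 := by
    rw [mul_one]
    exact le_trans h1 h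
  rw [ENNReal.mul_le_mul_iff_right
    ((ENNReal.zpow_pos (qe_ne_zero F) (qe_ne_top F) b).ne')
    (ENNReal.zpow_lt_top (qe_ne_zero F) (qe_ne_top F) b).ne] at h2
  exact (not_le.mpr (one_lt_qe F)) h2

lemma gnorm_actT_le_one (a : Polynomial F) : gnorm F (actT F a) ≤ 1 := by
  rw [gnorm_le_iff]
  intro j
  rw [actT_coeff]
  by_cases hc : a.coeff j = 0
  · rw [hc, map_zero, Kabs_zero]; exact zero_le_one
  · rw [HahnSeries.C_apply, Kabs_single F hc]
    simp

lemma gnorm_actT_mul_le (a : Polynomial F) (f : TS F) :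
    gnorm F (actT F a * f) ≤ gnorm F f := by
  calc gnorm F (actT F a * f) ≤ gnorm F (actT F a) * gnorm F f := gnorm_mul_le F _ _
  _ ≤ 1 * gnorm F f := mul_le_mul' (gnorm_actT_le_one F a) (le_refl _)
  _ = gnorm F f := one_mul _

lemma gnorm_sum_le_sum {ι : Type*} (s : Finset ι) (f : ι → TS F) :
    gnorm F (∑ i ∈ s, f i) ≤ ∑ i ∈ s, gnorm F (f i) := by
  classical
  induction s using Finset.induction_on with
  | empty => rw [Finset.sum_empty, Finset.sum_empty, gnorm_zero]
  | insert _ _ hnot ih =>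
    rename_i a s
    rw [Finset.sum_insert hnot, Finset.sum_insert hnot]
    refine le_trans (gnorm_add_le F _ _) (max_le ?_ ?_)
    · exact le_self_add
    · exact le_trans ih le_add_self

lemma squeeze_zero_e {f g : ℕ → ℝ≥0∞} (h : ∀ N, f N ≤ g N)
    (hg : Tendsto g atTop (nhds 0)) : Tendsto f atTop (nhds 0) := by
  rw [ENNReal.tendsto_nhds_zero] at hg ⊢
  intro ε hε
  exact (hg ε hε).mono fun N hN => le_trans (h N) hN

lemma TT_unique {s : ℕ → TS F} {L₁ L₂ : TS F} (h1 : TT F s L₁) (h2 : TT F s L₂) :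
    L₁ = L₂ := by
  have hb : ∀ N, gnorm F (L₁ - L₂) ≤ max (gnorm F (L₁ - s N)) (gnorm F (L₂ - s N)) := by
    intro N
    have : L₁ - L₂ = (L₁ - s N) + -(L₂ - s N) := by ring
    rw [this]
    exact le_trans (gnorm_add_le F _ _) (by rw [gnorm_neg])
  have hmax : Tendsto (fun N => max (gnorm F (L₁ - s N)) (gnorm F (L₂ - s N))) atTop (nhds 0) := by
    have := h1.max h2
    rwa [max_self] at this
  have hle : gnorm F (L₁ - L₂) ≤ 0 := ge_of_tendsto hmax (Filter.Eventually.of_forall hb)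
  have := gnorm_eq_zero F (le_antisymm hle (zero_le))
  exact sub_eq_zero.mp this

lemma TT_congr {s s' : ℕ → TS F} {L : TS F} (h : TT F s L) (hss : ∀ N, s N = s' N) :
    TT F s' L := by
  have : s = s' := funext hss
  rwa [this] at h

lemma TT_comb {k : ℕ} (d : Fin k → Polynomial F) (s : Fin k → ℕ → TS F) (L : Fin k → TS F)
    (h : ∀ i, TT F (s i) (L i)) :
    TT F (fun N => ∑ i, actT F (d i) * s i N) (∑ i, actT F (d i) * L i) := by
  unfold TT
  refine squeeze_zero_e (g := fun N => ∑ i, gnorm F (L i - s i N)) ?_ ?_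
  · intro N
    have heq : (∑ i, actT F (d i) * L i) - (∑ i, actT F (d i) * s i N)
        = ∑ i, actT F (d i) * (L i - s i N) := by
      rw [← Finset.sum_sub_distrib]
      exact Finset.sum_congr rfl fun i _ => by ring
    simp only [heq]
    refine le_trans (gnorm_sum_le_sum F _ _) ?_
    exact Finset.sum_le_sum fun i _ => gnorm_actT_mul_le F _ _
  · have := tendsto_finset_sum (Finset.univ : Finset (Fin k)) (fun (i : Fin k) _ => h i)
    simpa using this


lemma xiPartial_eq (n : ℕ) (e : TS F) (N : ℕ) :
    xiPartial F n e N
      = ∑ k ∈ Finset.range N, twistIter F k e * ∏ i ∈ Finset.range (k+1), invE F n i := by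
  unfold xiPartial
  refine Finset.sum_congr rfl fun k _ => ?_
  rw [show (∏ i ∈ Finset.range (k+1),
      (tt F - PowerSeries.C (R := Kinf F) (theta F ^ Fintype.card F ^ i)) ^ n)
    = ∏ i ∈ Finset.range (k+1), cfactor F n i from rfl, prod_cfactor_inv]

lemma twistIter_sum {ι : Type*} (k : ℕ) (s : Finset ι) (f : ι → TS F) :
    twistIter F k (∑ i ∈ s, f i) = ∑ i ∈ s, twistIter F k (f i) := by
  classical
  induction s using Finset.induction_on with
  | empty => simpa using twistIter_zero_fn F k
  | insert _ _ hnot ih =>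
    rename_i a s
    rw [Finset.sum_insert hnot, Finset.sum_insert hnot, twistIter_add, ih]

lemma sum_twist_comb (Inv : ℕ → TS F) (N : ℕ) {k : ℕ}
    (d : Fin k → Polynomial F) (g : Fin k → TS F) :
    ∑ j ∈ Finset.range N, twistIter F j (∑ i, actT F (d i) * g i) * Inv j
      = ∑ i, actT F (d i) * ∑ j ∈ Finset.range N, twistIter F j (g i) * Inv j := by
  calc ∑ j ∈ Finset.range N, twistIter F j (∑ i, actT F (d i) * g i) * Inv j
      = ∑ j ∈ Finset.range N, ∑ i, actT F (d i) * (twistIter F j (g i) * Inv j) :=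
        Finset.sum_congr rfl fun j _ => by
          rw [twistIter_sum, Finset.sum_mul]
          exact Finset.sum_congr rfl fun i _ => by rw [twistIter_actT_mul, mul_assoc]
  _ = ∑ i, ∑ j ∈ Finset.range N, actT F (d i) * (twistIter F j (g i) * Inv j) :=
        Finset.sum_comm
  _ = _ := Finset.sum_congr rfl fun i _ => by rw [← Finset.mul_sum]

lemma xiPartial_comb (n N : ℕ) {k : ℕ} (d : Fin k → Polynomial F) (g : Fin k → TS F) :
    xiPartial F n (∑ i, actT F (d i) * g i) N
      = ∑ i, actT F (d i) * xiPartial F n (g i) N := by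
  unfold xiPartial
  exact sum_twist_comb F
    (fun j => (∏ i ∈ Finset.range (j+1),
      (tt F - PowerSeries.C (R := Kinf F) (theta F ^ Fintype.card F ^ i)) ^ n)⁻¹) N d g

lemma exp_bound0 (n k : ℕ) (hn : 1 ≤ n) :
    ((n:ℤ) - 1) * ((Fintype.card F ^ k : ℕ) : ℤ)
      - (n:ℤ) * ∑ i ∈ Finset.range (k+1), ((Fintype.card F ^ i : ℕ) : ℤ) ≤ -1 := by
  rw [Finset.sum_range_succ]
  have h1 : (1:ℤ) ≤ ((Fintype.card F ^ k : ℕ) : ℤ) := by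
    exact_mod_cast Nat.one_le_iff_ne_zero.mpr (pow_ne_zero k Fintype.card_ne_zero)
  have h2 : (0:ℤ) ≤ ∑ i ∈ Finset.range k, ((Fintype.card F ^ i : ℕ) : ℤ) :=
    Finset.sum_nonneg fun i _ => Int.natCast_nonneg _
  have h3 : (1:ℤ) ≤ (n:ℤ) := by exact_mod_cast hn
  nlinarith [mul_nonneg (le_trans zero_le_one h3) h2]

lemma exp_bound1 (n k : ℕ) (hn : 1 ≤ n) (hk : 1 ≤ k) :
    ((n:ℤ) - 1) * ((Fintype.card F ^ k : ℕ) : ℤ)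
      - (n:ℤ) * ∑ i ∈ Finset.range (k+1), ((Fintype.card F ^ i : ℕ) : ℤ) ≤ -1 - (n:ℤ) := by
  rw [Finset.sum_range_succ]
  have h1 : (1:ℤ) ≤ ((Fintype.card F ^ k : ℕ) : ℤ) := by
    exact_mod_cast Nat.one_le_iff_ne_zero.mpr (pow_ne_zero k Fintype.card_ne_zero)
  have h2 : (1:ℤ) ≤ ∑ i ∈ Finset.range k, ((Fintype.card F ^ i : ℕ) : ℤ) := by
    have hmem : 0 ∈ Finset.range k := Finset.mem_range.mpr (by omega)
    have := Finset.single_le_sum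
      (f := fun i => ((Fintype.card F ^ i : ℕ) : ℤ))
      (fun i _ => Int.natCast_nonneg _) hmem
    simpa using this
  have h3 : (1:ℤ) ≤ (n:ℤ) := by exact_mod_cast hn
  nlinarith [mul_le_mul_of_nonneg_left h2 (le_trans zero_le_one h3)]

lemma gnorm_xi_term_le (n : ℕ) {e : TS F}
    (he : gnorm F e ≤ (Fintype.card F : ℝ≥0∞) ^ ((n:ℤ) - 1)) (k : ℕ) :
    gnorm F (twistIter F k e * ∏ i ∈ Finset.range (k+1), invE F n i)
      ≤ (Fintype.card F : ℝ≥0∞) ^ (((n:ℤ)-1) * ((Fintype.card F ^ k:ℕ):ℤ)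
          - (n:ℤ) * ∑ i ∈ Finset.range (k+1), ((Fintype.card F ^ i : ℕ):ℤ)) := by
  refine le_trans (gnorm_mul_le F _ _) ?_
  have h1 : gnorm F (twistIter F k e)
      ≤ (Fintype.card F : ℝ≥0∞) ^ (((n:ℤ)-1) * ((Fintype.card F ^ k:ℕ):ℤ)) := by
    have := gnorm_twistIter_le F he k
    rwa [qe_zpow_nmul] at this
  have h2 := gnorm_prod_invE_le F n (k+1)
  calc gnorm F (twistIter F k e) * gnorm F (∏ i ∈ Finset.range (k+1), invE F n i)
      ≤ (Fintype.card F : ℝ≥0∞) ^ (((n:ℤ)-1) * ((Fintype.card F ^ k:ℕ):ℤ))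
        * (Fintype.card F : ℝ≥0∞) ^ (-((n:ℤ) * ∑ i ∈ Finset.range (k+1), ((Fintype.card F ^ i : ℕ):ℤ))) :=
      mul_le_mul' h1 h2
  _ = _ := by
    rw [← ENNReal.zpow_add (qe_ne_zero F) (qe_ne_top F), ← sub_eq_add_neg]

lemma gnorm_of_mem_PolyDegLt {n : ℕ} (hn : 1 ≤ n) {g : TS F} (hg : g ∈ PolyDegLt F n) :
    gnorm F g ≤ (Fintype.card F : ℝ≥0∞) ^ ((n:ℤ) - 1) := by
  obtain ⟨P, hdeg, rfl⟩ := hg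
  exact gnorm_polyT_le F hdeg hn

lemma gnorm_xiPartial_le (n : ℕ) (hn : 1 ≤ n) {e : TS F}
    (he : gnorm F e ≤ (Fintype.card F : ℝ≥0∞) ^ ((n:ℤ) - 1)) (N : ℕ) :
    gnorm F (xiPartial F n e N) ≤ (Fintype.card F : ℝ≥0∞) ^ (-1:ℤ) := by
  rw [xiPartial_eq]
  refine gnorm_sum_le F fun k _ => ?_
  exact le_trans (gnorm_xi_term_le F n he k)
    (ENNReal.zpow_le_of_le (one_lt_qe F).le (exp_bound0 F n k hn))

lemma C_mem_PolyDegLt {n : ℕ} {b : Polynomial F} (hb : b.degree < (n:ℕ)) :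
    PowerSeries.C (R := Kinf F) (polyK F b) ∈ PolyDegLt F n := by
  refine ⟨Polynomial.C b, fun j => ?_, (polyT_C F b).symm⟩
  rw [Polynomial.coeff_C]
  split
  · exact hb
  · rw [Polynomial.degree_zero]; exact WithBot.bot_lt_coe _

lemma gnorm_xi_le (n : ℕ) (hn : 1 ≤ n) (xi : TS F → TS F)
    (hxi : ∀ e' ∈ PolyDegLt F n, IsTate F (xi e') ∧ TT F (xiPartial F n e') (xi e'))
    {g : TS F} (hg : g ∈ PolyDegLt F n) :
    gnorm F (xi g) ≤ (Fintype.card F : ℝ≥0∞) ^ (-1:ℤ) := by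
  obtain ⟨_, hconv⟩ := hxi g hg
  have hev : ∀ᶠ N in atTop,
      gnorm F (xi g - xiPartial F n g N) ≤ (Fintype.card F : ℝ≥0∞) ^ (-1:ℤ) :=
    ENNReal.tendsto_nhds_zero.mp hconv _ (ENNReal.zpow_pos (qe_ne_zero F) (qe_ne_top F) _)
  obtain ⟨N, hN⟩ := hev.exists
  have hsplit : xi g = (xi g - xiPartial F n g N) + xiPartial F n g N := by ring
  rw [hsplit]
  refine le_trans (gnorm_add_le F _ _) (max_le hN ?_)
  exact gnorm_xiPartial_le F n hn (gnorm_of_mem_PolyDegLt F hn hg) N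

lemma gnorm_factor_le (c : Kinf F) :
    gnorm F (tt F - PowerSeries.C (R := Kinf F) c) ≤ max 1 (Kabs (Fintype.card F) c) := by
  rw [sub_eq_add_neg]
  refine le_trans (gnorm_add_le F _ _) (max_le_max (gnorm_X_le F) ?_)
  rw [gnorm_neg, gnorm_C]

lemma xi_vanish (n : ℕ) (hn : 1 ≤ n) (xi : TS F → TS F)
    (hxi : ∀ e' ∈ PolyDegLt F n, IsTate F (xi e') ∧ TT F (xiPartial F n e') (xi e'))
    {g : TS F} (hg : g ∈ PolyDegLt F n) (hpoly : xi g ∈ PolyTT F) :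
    xi g = 0 ∧ g = 0 := by
  -- Step 1: `xi g = 0`.
  have hxig : xi g = 0 := by
    by_contra hne
    obtain ⟨S, hS⟩ := hpoly
    have h1 : 1 ≤ gnorm F (xi g) := by
      rw [← hS]
      exact one_le_gnorm_polyT F (by rw [hS]; exact hne)
    have h2 := gnorm_xi_le F n hn xi hxi hg
    have : (Fintype.card F : ℝ≥0∞) ^ (0:ℤ) ≤ (Fintype.card F : ℝ≥0∞) ^ (-1:ℤ) := by
      rw [zpow_zero]
      exact le_trans h1 h2
    have := qe_exp_le F this
    omega
  refine ⟨hxig, ?_⟩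
  -- Step 2: `g = 0`.
  by_contra hgne
  obtain ⟨_, hconv⟩ := hxi g hg
  rw [hxig] at hconv
  have htends : Tendsto (fun N => gnorm F (xiPartial F n g N)) atTop (nhds 0) := by
    unfold TT at hconv
    refine squeeze_zero_e (g := fun N => gnorm F ((0:TS F) - xiPartial F n g N)) ?_ hconv
    intro N
    show gnorm F (xiPartial F n g N) ≤ gnorm F ((0:TS F) - xiPartial F n g N)
    rw [zero_sub, gnorm_neg]
  obtain ⟨P, hdeg, rfl⟩ := hg
  have hg1 : 1 ≤ gnorm F (polyT F P) := one_le_gnorm_polyT F hgne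
  -- the first term of the series
  set t0 : TS F := polyT F P * ∏ i ∈ Finset.range 1, invE F n i with ht0def
  have hinvD : (∏ i ∈ Finset.range 1, invE F n i) * (∏ i ∈ Finset.range 1, cfactor F n i)
      = 1 := by
    have hterm : ∀ i ∈ Finset.range 1, invE F n i * cfactor F n i = 1 := fun i _ => by
      rw [mul_comm]; exact cfactor_mul_invE F n i
    rw [← Finset.prod_mul_distrib, Finset.prod_congr rfl hterm, Finset.prod_const_one]
  have hrec : polyT F P = t0 * ∏ i ∈ Finset.range 1, cfactor F n i := by
    rw [ht0def, mul_assoc, hinvD, mul_one]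
  have hD : gnorm F (∏ i ∈ Finset.range 1, cfactor F n i)
      ≤ (Fintype.card F : ℝ≥0∞) ^ ((n:ℤ)) := by
    rw [Finset.prod_range_one, cfactor]
    have hfac : gnorm F (tt F - PowerSeries.C (R := Kinf F) (theta F ^ Fintype.card F ^ 0))
        ≤ (Fintype.card F : ℝ≥0∞) ^ (1:ℤ) := by
      refine le_trans (gnorm_factor_le F _) ?_
      have : Kabs (Fintype.card F) (theta F ^ Fintype.card F ^ 0)
          = (Fintype.card F : ℝ≥0∞) ^ (1:ℤ) := by
        rw [pow_zero, pow_one, theta, Kabs_single F one_ne_zero]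
        norm_num
      rw [this]
      refine max_le ?_ (le_refl _)
      rw [zpow_one]
      exact (one_lt_qe F).le
    refine le_trans (gnorm_pow_le F hfac n) ?_
    rw [qe_zpow_nmul]
    exact ENNReal.zpow_le_of_le (one_lt_qe F).le (by omega)
  have hcancel : (Fintype.card F : ℝ≥0∞) ^ (-(n:ℤ)) * (Fintype.card F : ℝ≥0∞) ^ ((n:ℤ)) = 1 := by
    rw [← ENNReal.zpow_add (qe_ne_zero F) (qe_ne_top F)]
    simp
  have ht0 : (Fintype.card F : ℝ≥0∞) ^ (-(n:ℤ)) ≤ gnorm F t0 := by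
    have hgd : gnorm F (polyT F P) ≤ gnorm F t0 * (Fintype.card F : ℝ≥0∞) ^ ((n:ℤ)) := by
      rw [hrec]
      exact le_trans (gnorm_mul_le F _ _) (mul_le_mul' (le_refl _) hD)
    have h1' : (1:ℝ≥0∞) ≤ gnorm F t0 * (Fintype.card F : ℝ≥0∞) ^ ((n:ℤ)) :=
      le_trans hg1 hgd
    calc (Fintype.card F : ℝ≥0∞) ^ (-(n:ℤ))
        = (Fintype.card F : ℝ≥0∞) ^ (-(n:ℤ)) * 1 := (mul_one _).symm
    _ ≤ (Fintype.card F : ℝ≥0∞) ^ (-(n:ℤ)) * (gnorm F t0 * (Fintype.card F : ℝ≥0∞) ^ ((n:ℤ))) :=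
      mul_le_mul' (le_refl _) h1'
    _ = gnorm F t0 * ((Fintype.card F : ℝ≥0∞) ^ (-(n:ℤ)) * (Fintype.card F : ℝ≥0∞) ^ ((n:ℤ))) := by
      ring
    _ = gnorm F t0 := by rw [hcancel, mul_one]
  -- choose a large cut-off
  have hev : ∀ᶠ N in atTop, gnorm F (xiPartial F n (polyT F P) N)
      ≤ (Fintype.card F : ℝ≥0∞) ^ (-1 - (n:ℤ)) :=
    ENNReal.tendsto_nhds_zero.mp htends _ (ENNReal.zpow_pos (qe_ne_zero F) (qe_ne_top F) _)
  obtain ⟨N, hN1, hN⟩ := (eventually_ge_atTop 1).and hev |>.exists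
  obtain ⟨M, rfl⟩ : ∃ M, N = M + 1 := ⟨N - 1, by omega⟩
  have hsplit : xiPartial F n (polyT F P) (M+1)
      = (∑ j ∈ Finset.range M,
          twistIter F (j+1) (polyT F P) * ∏ i ∈ Finset.range (j+1+1), invE F n i) + t0 := by
    rw [xiPartial_eq, Finset.sum_range_succ']
    congr 1
  have hrest : gnorm F (∑ j ∈ Finset.range M,
      twistIter F (j+1) (polyT F P) * ∏ i ∈ Finset.range (j+1+1), invE F n i)
      ≤ (Fintype.card F : ℝ≥0∞) ^ (-1 - (n:ℤ)) := by
    refine gnorm_sum_le F fun j _ => ?_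
    refine le_trans (gnorm_xi_term_le F n (gnorm_of_mem_PolyDegLt F hn ⟨P, hdeg, rfl⟩) (j+1)) ?_
    refine ENNReal.zpow_le_of_le (one_lt_qe F).le ?_
    have := exp_bound1 F n (j+1) hn (by omega)
    omega
  have ht0le : gnorm F t0 ≤ max (gnorm F (xiPartial F n (polyT F P) (M+1)))
      (gnorm F (∑ j ∈ Finset.range M,
        twistIter F (j+1) (polyT F P) * ∏ i ∈ Finset.range (j+1+1), invE F n i)) := by
    have : t0 = xiPartial F n (polyT F P) (M+1)
        + -(∑ j ∈ Finset.range M,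
          twistIter F (j+1) (polyT F P) * ∏ i ∈ Finset.range (j+1+1), invE F n i) := by
      rw [hsplit]; ring
    rw [this]
    exact le_trans (gnorm_add_le F _ _) (by rw [gnorm_neg])
  have hfinal : (Fintype.card F : ℝ≥0∞) ^ (-(n:ℤ))
      ≤ (Fintype.card F : ℝ≥0∞) ^ (-1 - (n:ℤ)) :=
    le_trans ht0 (le_trans ht0le (max_le hN hrest))
  have := qe_exp_le F hfinal
  omega


lemma xi_comb (n : ℕ) (xi : TS F → TS F)
    (hxi : ∀ e' ∈ PolyDegLt F n, IsTate F (xi e') ∧ TT F (xiPartial F n e') (xi e'))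
    {k : ℕ} (d : Fin k → Polynomial F) (α : Fin k → Polynomial F)
    (hα : ∀ i, (α i).degree < (n:ℕ)) :
    xi (∑ i, actT F (d i) * PowerSeries.C (R := Kinf F) (polyK F (α i)))
      = ∑ i, actT F (d i) * xi (PowerSeries.C (R := Kinf F) (polyK F (α i))) := by
  have hmem := combPoly_mem_PolyDegLt F d α hα
  have h1 := (hxi _ hmem).2
  have h2 : TT F (xiPartial F n (∑ i, actT F (d i) * PowerSeries.C (R := Kinf F) (polyK F (α i))))
      (∑ i, actT F (d i) * xi (PowerSeries.C (R := Kinf F) (polyK F (α i)))) := by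
    have hc := TT_comb F d (fun i => xiPartial F n (PowerSeries.C (R := Kinf F) (polyK F (α i))))
      (fun i => xi (PowerSeries.C (R := Kinf F) (polyK F (α i))))
      (fun i => (hxi _ (C_mem_PolyDegLt F (hα i))).2)
    exact TT_congr F hc (fun N => (xiPartial_comb F n N d _).symm)
  exact TT_unique F h1 h2

end Aux








/-- Let `n ≥ 1` with `(q−1) | n`, let `(α_1, …, α_n)` be an `𝔽`-basis
of `{α ∈ 𝔽[θ] : deg α < n}` and let `a_0, …, a_n ∈ 𝔽[t]` be a relatively prime family
with `a_0·ω_n + a_1·ξ_{α_1} + ⋯ + a_n·ξ_{α_n} ∈ 𝔽[θ,t]`.  Then `e = ∑_{i=1}^n a_i·α_i`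
generates `ker φ`: for `e' ∈ 𝔽[θ,t]_{deg_θ<n}` one has
`ξ_{e'} ∈ 𝔽[θ,t] + 𝔽[t]·ω_n ↔ e' ∈ 𝔽[t]·e`. -/
theorem statement12 (q n m : ℕ) (hq : q = Fintype.card F)
    (hm : 1 ≤ m) (hn : n = m * (q - 1))
    (ω : TS F) (hω : IsTate F ω) (hωc : TT F (omegaPartial F n m) ω)
    (xi : TS F → TS F)
    (hxi : ∀ e' ∈ PolyDegLt F n, IsTate F (xi e') ∧ TT F (xiPartial F n e') (xi e'))
    (α : Fin n → Polynomial F) (hα : ∀ i, (α i).degree < (n : ℕ))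
    (hbasis : ∀ b : Polynomial F, b.degree < (n : ℕ) →
      ∃! cf : Fin n → F, b = ∑ i, Polynomial.C (cf i) * α i)
    (a : Fin (n + 1) → Polynomial F)
    (hcop : Finset.univ.gcd a = 1)
    (hrel : actT F (a 0) * ω
        + ∑ i : Fin n, actT F (a i.succ) * xi (PowerSeries.C (R := Kinf F) (polyK F (α i)))
      ∈ PolyTT F)
    (e : TS F)
    (he : e = ∑ i : Fin n, actT F (a i.succ) * PowerSeries.C (R := Kinf F) (polyK F (α i))) :
    ∀ e' ∈ PolyDegLt F n,
      ((∃ P ∈ PolyTT F, ∃ b : Polynomial F, xi e' = P + actT F b * ω)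
        ↔ ∃ cc : Polynomial F, e' = actT F cc * e) := by
  intro e' he'mem
  -- basic facts
  have hq2 : 2 ≤ q := by rw [hq]; exact Fintype.one_lt_card
  have hn1 : 1 ≤ n := by
    rw [hn]
    calc 1 = 1 * 1 := (one_mul 1).symm
    _ ≤ m * (q - 1) := Nat.mul_le_mul hm (by omega)
  subst hq
  have hemem : e ∈ PolyDegLt F n := by
    rw [he]
    exact combPoly_mem_PolyDegLt F _ α hα
  have hxe : xi e = ∑ i, actT F (a i.succ) * xi (PowerSeries.C (R := Kinf F) (polyK F (α i))) := by
    rw [he]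
    exact xi_comb F n xi hxi _ α hα
  obtain ⟨R, hR⟩ := hrel
  have hxiE : xi e = polyT F R - actT F (a 0) * ω := by
    rw [hxe]
    have := eq_sub_of_add_eq' hR.symm
    exact this
  constructor
  · -- hard direction
    rintro ⟨P, hP, b, hxieq⟩
    obtain ⟨R', rfl⟩ := hP
    obtain ⟨c, hc⟩ := exists_coords F hbasis he'mem
    have hE2 : actT F (a 0) * e' + actT F b * e
        = ∑ i, actT F (a 0 * c i + b * a i.succ)
            * PowerSeries.C (R := Kinf F) (polyK F (α i)) := by
      rw [hc, he, Finset.mul_sum, Finset.mul_sum, ← Finset.sum_add_distrib]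
      refine Finset.sum_congr rfl fun i _ => ?_
      rw [map_add, map_mul, map_mul]
      ring
    have hE2mem : actT F (a 0) * e' + actT F b * e ∈ PolyDegLt F n := by
      rw [hE2]
      exact combPoly_mem_PolyDegLt F _ α hα
    have hxiE2 : xi (actT F (a 0) * e' + actT F b * e)
        = actT F (a 0) * xi e' + actT F b * xi e := by
      rw [hE2, xi_comb F n xi hxi _ α hα, hc, he,
        xi_comb F n xi hxi _ α hα, xi_comb F n xi hxi _ α hα,
        Finset.mul_sum, Finset.mul_sum, ← Finset.sum_add_distrib]
      refine Finset.sum_congr rfl fun i _ => ?_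
      rw [map_add, map_mul, map_mul]
      ring
    have hxiE2poly : xi (actT F (a 0) * e' + actT F b * e) ∈ PolyTT F := by
      refine ⟨(a 0).map Polynomial.C * R' + b.map Polynomial.C * R, ?_⟩
      rw [map_add, map_mul, map_mul, ← actT_eq_polyT, ← actT_eq_polyT,
        hxiE2, hxieq, hxiE]
      ring
    obtain ⟨_, hE2zero⟩ := xi_vanish F n hn1 xi hxi hE2mem hxiE2poly
    have hcoef : ∀ i, a 0 * c i + b * a i.succ = 0 := by
      apply comb_eq_zero_iff F hbasis
      rw [← hE2]
      exact hE2zero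
    by_cases ha0 : a 0 = 0
    · -- `a 0 = 0` forces `b = 0` and then `e' = 0`
      by_cases hb : b = 0
      · have hxe'poly : xi e' ∈ PolyTT F := by
          refine ⟨R', ?_⟩
          rw [hxieq, hb, map_zero, zero_mul, add_zero]
        obtain ⟨_, he'0⟩ := xi_vanish F n hn1 xi hxi he'mem hxe'poly
        exact ⟨0, by rw [map_zero, zero_mul, he'0]⟩
      · exfalso
        have hzero : ∀ j, a j = 0 := by
          intro j
          refine Fin.cases ha0 (fun i => ?_) j
          have := hcoef i
          rw [ha0, zero_mul, zero_add, mul_eq_zero] at this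
          exact this.resolve_left hb
        have : Finset.univ.gcd a = 0 := Finset.gcd_eq_zero_iff.mpr fun j _ => hzero j
        rw [hcop] at this
        exact one_ne_zero this
    · -- `a 0 ≠ 0`: then `a 0 ∣ b`, giving the generator property
      have hdvd : ∀ j, a 0 ∣ b * a j := by
        intro j
        refine Fin.cases (dvd_mul_left _ _) (fun i => ?_) j
        have := hcoef i
        have hbm : b * a i.succ = -(a 0 * c i) := by linear_combination this
        rw [hbm]
        exact (dvd_mul_right _ _).neg_right
      have hgd : a 0 ∣ Finset.univ.gcd (fun j => b * a j) :=
        Finset.dvd_gcd fun j _ => hdvd j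
      rw [Finset.gcd_mul_left, hcop, mul_one] at hgd
      rw [dvd_normalize_iff] at hgd
      obtain ⟨d0, hd0⟩ := hgd
      refine ⟨-d0, ?_⟩
      have hci : ∀ i, c i = -d0 * a i.succ := by
        intro i
        have h0 := hcoef i
        rw [hd0] at h0
        have : a 0 * (c i + d0 * a i.succ) = 0 := by linear_combination h0
        rcases mul_eq_zero.mp this with h | h
        · exact absurd h ha0
        · linear_combination h
      rw [hc, he, Finset.mul_sum]
      refine Finset.sum_congr rfl fun i _ => ?_
      rw [hci i, map_mul]
      ring
  · -- easy direction
    rintro ⟨cc, rfl⟩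
    have hsum : actT F cc * e
        = ∑ i, actT F (cc * a i.succ) * PowerSeries.C (R := Kinf F) (polyK F (α i)) := by
      rw [he, Finset.mul_sum]
      refine Finset.sum_congr rfl fun i _ => ?_
      rw [map_mul]
      ring
    have hxicc : xi (actT F cc * e) = actT F cc * xi e := by
      rw [hsum, xi_comb F n xi hxi _ α hα, he, xi_comb F n xi hxi _ α hα, Finset.mul_sum]
      refine Finset.sum_congr rfl fun i _ => ?_
      rw [map_mul]
      ring
    refine ⟨polyT F (cc.map Polynomial.C * R), ⟨_, rfl⟩, -(cc * a 0), ?_⟩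
    rw [hxicc, hxiE, map_mul, ← actT_eq_polyT, map_neg, map_mul]
    ring

end Carlitz
end
end

section
/- For every integer n ≥ 1, writing n = h(q−1) + δ with integers h ≥ 0 and 0 ≤ δ < q−1, one has the identity of formal power series in x over 𝔽[t]: Z(x,−n) = 1 − x·∑_{i=0}^{h−1} C(n, i(q−1)+δ)·t^{i(q−1)+δ}·Z(x, −(i(q−1)+δ)), where C(n,k) denotes the image in 𝔽 of the binomial coefficient (n choose k). -/
open scoped Classical ENNReal
open Filter

noncomputable section

namespace Carlitz

variable (F : Type) [Field F] [Fintype F]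

/-- `S_d(n) = ∑_{a monic, deg a = d} aⁿ ∈ 𝔽[t]`: a monic polynomial of degree `d` is
`X^d + ∑_{i<d} c_i X^i` for a unique tuple of coefficients `c`. -/
def Sd (n d : ℕ) : Polynomial F :=
  ∑ c : Fin d → F,
    (Polynomial.X ^ d + ∑ i : Fin d, Polynomial.C (c i) * Polynomial.X ^ (i : ℕ)) ^ n

/-- `Z(x,−n) = ∑_{d≥0} S_d(n)·x^d ∈ 𝔽[t][[x]]`. -/
def Z (n : ℕ) : PowerSeries (Polynomial F) := PowerSeries.mk fun d => Sd F n d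


section Statement17Aux
set_option linter.unusedSectionVars false
set_option linter.unusedVariables false

private lemma sum_pow_field (m : ℕ) (hm : m ≠ 0) :
    ∑ c : F, c ^ m = if (Fintype.card F - 1) ∣ m then (-1 : F) else 0 := by
  classical
  let φ : Fˣ ↪ F := ⟨fun x ↦ x, Units.val_injective⟩
  have huniv : Finset.univ.map φ = Finset.univ \ {0} := by
    ext x
    simp only [Finset.mem_map, Finset.mem_univ, Function.Embedding.coeFn_mk, true_and,
      Finset.mem_sdiff, Finset.mem_singleton, φ]
    exact isUnit_iff_ne_zero
  calc
    ∑ x : F, x ^ m = ∑ x ∈ Finset.univ \ {(0 : F)}, x ^ m := by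
      rw [← Finset.sum_sdiff (({0} : Finset F).subset_univ), Finset.sum_singleton,
        zero_pow hm, add_zero]
    _ = ∑ x : Fˣ, (x ^ m : F) := by simp [φ, ← huniv, Finset.univ.sum_map φ]
    _ = _ := FiniteField.sum_pow_units F m

private def Mon (d : ℕ) (c : Fin d → F) : Polynomial F :=
  Polynomial.X ^ d + ∑ i : Fin d, Polynomial.C (c i) * Polynomial.X ^ (i : ℕ)

private lemma Mon_cons (d : ℕ) (c₀ : F) (b : Fin d → F) :
    Mon F (d+1) (Fin.cons c₀ b) = Polynomial.X * Mon F d b + Polynomial.C c₀ := by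
  simp only [Mon, Fin.sum_univ_succ, Fin.cons_zero, Fin.cons_succ, Fin.val_succ, Fin.val_zero,
    pow_zero, mul_one, mul_add, Finset.mul_sum]
  rw [Finset.sum_congr rfl (fun i _ => by ring :
    ∀ i ∈ Finset.univ, Polynomial.C (b i) * Polynomial.X ^ ((i : ℕ)+1)
      = Polynomial.X * (Polynomial.C (b i) * Polynomial.X ^ (i : ℕ)))]
  ring

private lemma Sd_eq (n d : ℕ) : Sd F n d = ∑ c : Fin d → F, (Mon F d c) ^ n := rfl

private lemma Sd_succ (n d : ℕ) :
    Sd F n (d + 1) =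
      ∑ k ∈ Finset.range (n + 1),
        Polynomial.C (∑ c : F, c ^ (n - k)) *
          (Polynomial.C ((n.choose k : ℕ) : F) * Polynomial.X ^ k * Sd F k d) := by
  have h1 : Sd F n (d+1)
      = ∑ p : F × (Fin d → F), (Polynomial.X * Mon F d p.2 + Polynomial.C p.1) ^ n := by
    rw [Sd_eq, ← (Fin.consEquiv fun _ : Fin (d+1) => F).sum_comp
        (fun c => (Mon F (d+1) c) ^ n)]
    exact Fintype.sum_congr _ _ fun p => by
      rw [show ((Fin.consEquiv fun _ : Fin (d+1) => F) p) = Fin.cons p.1 p.2 from rfl, Mon_cons]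
  rw [h1, Fintype.sum_prod_type]
  simp only [add_pow, mul_pow, ← Polynomial.C_pow]
  rw [Finset.sum_congr rfl fun c₀ _ => Finset.sum_comm, Finset.sum_comm]
  refine Finset.sum_congr rfl fun k _ => ?_
  have : ∀ (c₀ : F) (b : Fin d → F),
      Polynomial.X ^ k * Mon F d b ^ k * Polynomial.C (c₀ ^ (n - k)) * (n.choose k : Polynomial F)
        = Polynomial.C (c₀ ^ (n - k)) *
          (Polynomial.C ((n.choose k : ℕ) : F) * Polynomial.X ^ k * Mon F d b ^ k) := by
    intro c₀ b
    rw [show ((n.choose k : ℕ) : Polynomial F) = Polynomial.C ((n.choose k : ℕ) : F) from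
      (map_natCast Polynomial.C (n.choose k)).symm]
    ring
  simp only [this]
  rw [← Finset.sum_mul_sum, ← map_sum]
  congr 1
  rw [Sd_eq, Finset.mul_sum]

private lemma filter_eq_image (q n h δ : ℕ) (hdiv : n = h * (q - 1) + δ) (hδ : δ < q - 1) :
    (Finset.range (n+1)).filter (fun k => n - k ≠ 0 ∧ (q - 1) ∣ (n - k))
      = Finset.image (fun i => i * (q - 1) + δ) (Finset.range h) := by
  set e := q - 1 with he
  have he1 : 1 ≤ e := by omega
  ext k
  simp only [Finset.mem_filter, Finset.mem_range, Finset.mem_image]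
  constructor
  · rintro ⟨hk1, hk0, j, hj⟩
    have hj1 : 1 ≤ j := by
      rcases Nat.eq_zero_or_pos j with h0 | h0
      · subst h0; simp at hj; omega
      · exact h0
    have hjh : j ≤ h := by
      by_contra hc
      push_neg at hc
      have : e * (h + 1) ≤ e * j := Nat.mul_le_mul_left e hc
      have h2 : e * (h+1) = h * e + e := by ring
      omega
    refine ⟨h - j, by omega, ?_⟩
    have hsub : (h - j) * e = h * e - j * e := Nat.sub_mul h j e
    have : j * e ≤ h * e := Nat.mul_le_mul_right e hjh
    have hje : e * j = j * e := Nat.mul_comm e j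
    omega
  · rintro ⟨i, hi, rfl⟩
    have hie : (i + 1) * e ≤ h * e := Nat.mul_le_mul_right e hi
    have hie2 : (i + 1) * e = i * e + e := by ring
    refine ⟨by omega, by omega, h - i, ?_⟩
    have hsub : (h - i) * e = h * e - i * e := Nat.sub_mul h i e
    have hcomm : e * (h - i) = (h - i) * e := Nat.mul_comm _ _
    omega

private lemma Sd_key (q n h δ : ℕ) (hq : q = Fintype.card F) (hn : 1 ≤ n)
    (hdiv : n = h * (q - 1) + δ) (hδ : δ < q - 1) (d : ℕ) :
    Sd F n (d + 1) = -∑ i ∈ Finset.range h,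
      Polynomial.C ((n.choose (i * (q - 1) + δ) : ℕ) : F)
        * Polynomial.X ^ (i * (q - 1) + δ) * Sd F (i * (q - 1) + δ) d := by
  classical
  set g : ℕ → Polynomial F := fun k =>
    Polynomial.C ((n.choose k : ℕ) : F) * Polynomial.X ^ k * Sd F k d with hg
  have hC : ∀ k ∈ Finset.range (n + 1),
      Polynomial.C (∑ c : F, c ^ (n - k)) * g k
        = if n - k ≠ 0 ∧ (q - 1) ∣ (n - k) then -(g k) else 0 := by
    intro k _
    by_cases hnk : n - k = 0
    · have hz : (∑ c : F, c ^ (n - k)) = 0 := by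
        rw [hnk]
        simp [Finset.card_univ, FiniteField.cast_card_eq_zero]
      rw [hz, if_neg (by tauto)]
      simp
    · rw [sum_pow_field F _ hnk, ← hq]
      by_cases hd : (q - 1) ∣ (n - k)
      · rw [if_pos hd, if_pos ⟨hnk, hd⟩]
        simp
      · rw [if_neg hd, if_neg (by tauto)]
        simp
  rw [Sd_succ, Finset.sum_congr rfl hC, ← Finset.sum_filter,
    filter_eq_image q n h δ hdiv hδ,
    Finset.sum_image (by
      intro a _ b _ hab
      beta_reduce at hab
      have he1 : 1 ≤ q - 1 := by omega
      have := Nat.eq_of_mul_eq_mul_right (by omega : 0 < q - 1)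
        (by omega : a * (q - 1) = b * (q - 1))
      exact this)]
  rw [← Finset.sum_neg_distrib]

end Statement17Aux

/-- Goss's recursion.  For `n ≥ 1`, writing `n = h(q−1) + δ` with
`0 ≤ δ < q−1`, one has
`Z(x,−n) = 1 − x·∑_{i<h} C(n, i(q−1)+δ)·t^{i(q−1)+δ}·Z(x, −(i(q−1)+δ))`
in `𝔽[t][[x]]`, where `C(n,k)` is the image in `𝔽` of the binomial coefficient. -/
theorem statement17 (q n h δ : ℕ) (hq : q = Fintype.card F) (hn : 1 ≤ n)
    (hdiv : n = h * (q - 1) + δ) (hδ : δ < q - 1) :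
    Z F n = 1 - PowerSeries.X * ∑ i ∈ Finset.range h,
      PowerSeries.C (R := Polynomial F)
          (Polynomial.C ((n.choose (i * (q - 1) + δ) : ℕ) : F)
            * Polynomial.X ^ (i * (q - 1) + δ))
        * Z F (i * (q - 1) + δ) := by
  classical
  apply PowerSeries.ext
  intro d
  rw [map_sub, PowerSeries.coeff_one]
  cases d with
  | zero =>
    rw [show (PowerSeries.coeff (R := Polynomial F) 0) (Z F n) = Sd F n 0 from
      PowerSeries.coeff_mk _ _]
    have h0 : Sd F n 0 = 1 := by simp [Sd]
    rw [h0, if_pos rfl]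
    simp
  | succ d =>
    rw [PowerSeries.coeff_succ_X_mul, if_neg (by omega), map_sum,
      show (PowerSeries.coeff (R := Polynomial F) (d+1)) (Z F n) = Sd F n (d+1) from
        PowerSeries.coeff_mk _ _]
    rw [Sd_key F q n h δ hq hn hdiv hδ d, zero_sub]
    congr 1
    refine Finset.sum_congr rfl fun i _ => ?_
    rw [PowerSeries.coeff_C_mul,
      show (PowerSeries.coeff (R := Polynomial F) d) (Z F (i * (q - 1) + δ))
        = Sd F (i * (q - 1) + δ) d from PowerSeries.coeff_mk _ _]

end Carlitz
end
end
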